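/- For every real r, as T → 0 from the right, the variance of the second coordinate has the Taylor approximation Var₂(T) = (r² T² / 3)(1 − T²/5) + O(T⁶); that is, the function T ↦ Var₂(T) − (r² T² / 3)(1 − T²/5) is big-O of T ↦ T⁶ along the filter of punctured right neighborhoods of 0. -/

import Mathlib

open MeasureTheory intervalIntegral Asymptotics Filter

lemma nonneg_of_hasDerivAt (f g : ℝ → ℝ) (hd : ∀ x, HasDerivAt f (g x) x)
    (h0 : f 0 = 0) (hg : ∀ x, 0 ≤ x → 0 ≤ g x) : ∀ x, 0 ≤ x → 0 ≤ f x := by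
  intro x hx
  have hdiff : Differentiable ℝ f := fun y => (hd y).differentiableAt
  have hmono : MonotoneOn f (Set.Ici 0) := by
    apply monotoneOn_of_deriv_nonneg (convex_Ici 0) hdiff.continuous.continuousOn
      (fun y _ => (hdiff y).differentiableWithinAt)
    intro y hy
    rw [(hd y).deriv]
    rw [interior_Ici] at hy
    exact hg y (le_of_lt hy)
  simpa [h0] using hmono Set.self_mem_Ici hx hx

lemma sin_le_id : ∀ x : ℝ, 0 ≤ x → 0 ≤ x - Real.sin x := by
  apply nonneg_of_hasDerivAt _ (fun x => 1 - Real.cos x)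
  · intro x
    exact (hasDerivAt_id x).sub (Real.hasDerivAt_sin x)
  · simp
  · intro x _
    simpa using Real.cos_le_one x

lemma cos_ge2 : ∀ x : ℝ, 0 ≤ x → 0 ≤ Real.cos x - 1 + x ^ 2 / 2 := by
  apply nonneg_of_hasDerivAt _ (fun x => x - Real.sin x)
  · intro x
    have : HasDerivAt (fun x : ℝ => Real.cos x - 1 + x ^ 2 / 2)
        (-Real.sin x - 0 + (2 : ℕ) * x ^ 1 / 2) x :=
      (((Real.hasDerivAt_cos x).sub (hasDerivAt_const x 1)).add
        ((hasDerivAt_pow 2 x).div_const 2))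
    convert this using 1
    push_cast; ring
  · simp
  · exact sin_le_id

lemma sin_ge3 : ∀ x : ℝ, 0 ≤ x → 0 ≤ Real.sin x - x + x ^ 3 / 6 := by
  apply nonneg_of_hasDerivAt _ (fun x => Real.cos x - 1 + x ^ 2 / 2)
  · intro x
    have : HasDerivAt (fun x : ℝ => Real.sin x - x + x ^ 3 / 6)
        (Real.cos x - 1 + (3 : ℕ) * x ^ 2 / 6) x :=
      ((Real.hasDerivAt_sin x).sub (hasDerivAt_id x)).add ((hasDerivAt_pow 3 x).div_const 6)
    convert this using 1
    push_cast; ring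
  · simp
  · exact cos_ge2

lemma cos_le4 : ∀ x : ℝ, 0 ≤ x → 0 ≤ 1 - x ^ 2 / 2 + x ^ 4 / 24 - Real.cos x := by
  apply nonneg_of_hasDerivAt _ (fun x => Real.sin x - x + x ^ 3 / 6)
  · intro x
    have : HasDerivAt (fun x : ℝ => 1 - x ^ 2 / 2 + x ^ 4 / 24 - Real.cos x)
        (0 - (2 : ℕ) * x ^ 1 / 2 + (4 : ℕ) * x ^ 3 / 24 - -Real.sin x) x :=
      (((hasDerivAt_const x 1).sub ((hasDerivAt_pow 2 x).div_const 2)).add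
        ((hasDerivAt_pow 4 x).div_const 24)).sub (Real.hasDerivAt_cos x)
    convert this using 1
    push_cast; ring
  · simp
  · exact sin_ge3

lemma sin_le5 : ∀ x : ℝ, 0 ≤ x → 0 ≤ x - x ^ 3 / 6 + x ^ 5 / 120 - Real.sin x := by
  apply nonneg_of_hasDerivAt _ (fun x => 1 - x ^ 2 / 2 + x ^ 4 / 24 - Real.cos x)
  · intro x
    have : HasDerivAt (fun x : ℝ => x - x ^ 3 / 6 + x ^ 5 / 120 - Real.sin x)
        (1 - (3 : ℕ) * x ^ 2 / 6 + (5 : ℕ) * x ^ 4 / 120 - Real.cos x) x :=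
      (((hasDerivAt_id x).sub ((hasDerivAt_pow 3 x).div_const 6)).add
        ((hasDerivAt_pow 5 x).div_const 120)).sub (Real.hasDerivAt_sin x)
    convert this using 1
    push_cast; ring
  · simp
  · exact cos_le4

lemma cos_ge6 : ∀ x : ℝ, 0 ≤ x → 0 ≤ Real.cos x - 1 + x ^ 2 / 2 - x ^ 4 / 24 + x ^ 6 / 720 := by
  apply nonneg_of_hasDerivAt _ (fun x => x - x ^ 3 / 6 + x ^ 5 / 120 - Real.sin x)
  · intro x
    have : HasDerivAt (fun x : ℝ => Real.cos x - 1 + x ^ 2 / 2 - x ^ 4 / 24 + x ^ 6 / 720)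
        (-Real.sin x - 0 + (2 : ℕ) * x ^ 1 / 2 - (4 : ℕ) * x ^ 3 / 24 + (6 : ℕ) * x ^ 5 / 720) x :=
      ((((Real.hasDerivAt_cos x).sub (hasDerivAt_const x 1)).add
        ((hasDerivAt_pow 2 x).div_const 2)).sub ((hasDerivAt_pow 4 x).div_const 24)).add
        ((hasDerivAt_pow 6 x).div_const 720)
    convert this using 1
    push_cast; ring
  · simp
  · exact sin_le5

lemma sin_ge7 : ∀ x : ℝ, 0 ≤ x → 0 ≤ Real.sin x - x + x ^ 3 / 6 - x ^ 5 / 120 + x ^ 7 / 5040 := by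
  apply nonneg_of_hasDerivAt _
    (fun x => Real.cos x - 1 + x ^ 2 / 2 - x ^ 4 / 24 + x ^ 6 / 720)
  · intro x
    have : HasDerivAt (fun x : ℝ => Real.sin x - x + x ^ 3 / 6 - x ^ 5 / 120 + x ^ 7 / 5040)
        (Real.cos x - 1 + (3 : ℕ) * x ^ 2 / 6 - (5 : ℕ) * x ^ 4 / 120
          + (7 : ℕ) * x ^ 6 / 5040) x :=
      ((((Real.hasDerivAt_sin x).sub (hasDerivAt_id x)).add
        ((hasDerivAt_pow 3 x).div_const 6)).sub ((hasDerivAt_pow 5 x).div_const 120)).add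
        ((hasDerivAt_pow 7 x).div_const 5040)
    convert this using 1
    push_cast; ring
  · simp
  · exact cos_ge6

/-- Variance of the second coordinate under the uniform distribution on the arc. -/
noncomputable def Var2 (r T : ℝ) : ℝ :=
  (1 / (2 * T)) * ∫ t in (-T)..T, (r * Real.sin t) ^ 2

/-- for every real `r`, as `T → 0⁺`,
`Var₂(T) = (r² T² / 3)(1 − T²/5) + O(T⁶)`; that is,
`T ↦ Var₂(T) − (r² T² / 3)(1 − T²/5)` is big-O of `T ↦ T⁶` along the filter of
punctured right neighborhoods of `0`. -/
theorem variance_second_coordinate_taylor (r : ℝ) :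
    (fun T : ℝ => Var2 r T - (r ^ 2 * T ^ 2 / 3) * (1 - T ^ 2 / 5))
      =O[nhdsWithin 0 (Set.Ioi 0)] (fun T : ℝ => T ^ 6) := by
  rw [isBigO_iff]
  refine ⟨r ^ 2, ?_⟩
  filter_upwards [self_mem_nhdsWithin] with T hT
  have hT0 : (0 : ℝ) < T := hT
  -- compute Var2
  have hint : (∫ t in (-T)..T, (r * Real.sin t) ^ 2)
      = r ^ 2 * (T - Real.sin T * Real.cos T) := by
    have : (∫ t in (-T)..T, (r * Real.sin t) ^ 2)
        = r ^ 2 * ∫ t in (-T)..T, Real.sin t ^ 2 := by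
      simp_rw [mul_pow]
      exact intervalIntegral.integral_const_mul _ _
    rw [this, integral_sin_sq, Real.sin_neg, Real.cos_neg]
    ring
  have hVar : Var2 r T = r ^ 2 / (2 * T) * (T - Real.sin T * Real.cos T) := by
    rw [Var2, hint]; ring
  -- Taylor bounds for x = 2T
  set x := 2 * T with hx
  have hx0 : 0 ≤ x := by positivity
  have h1 := sin_le5 x hx0
  have h2 := sin_ge7 x hx0
  have hsc : Real.sin T * Real.cos T = Real.sin x / 2 := by
    rw [hx, Real.sin_two_mul]; ring
  set δ : ℝ := T - Real.sin T * Real.cos T - (2 * T ^ 3 / 3 - 2 * T ^ 5 / 15) with hδ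
  have hδ0 : 0 ≤ δ := by
    rw [hδ, hsc]
    have : T - Real.sin x / 2 - (2 * T ^ 3 / 3 - 2 * T ^ 5 / 15)
        = (x - x ^ 3 / 6 + x ^ 5 / 120 - Real.sin x) / 2 := by
      rw [hx]; ring
    rw [this]
    linarith
  have hδ1 : δ ≤ x ^ 7 / 10080 := by
    rw [hδ, hsc]
    have : T - Real.sin x / 2 - (2 * T ^ 3 / 3 - 2 * T ^ 5 / 15)
        = (x - x ^ 3 / 6 + x ^ 5 / 120 - Real.sin x) / 2 := by
      rw [hx]; ring
    rw [this]
    linarith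
  have hxpow : x ^ 7 = 128 * T ^ 7 := by rw [hx]; ring
  have hdiff : Var2 r T - (r ^ 2 * T ^ 2 / 3) * (1 - T ^ 2 / 5)
      = r ^ 2 / (2 * T) * δ := by
    rw [hVar, hδ, hx]
    field_simp
    ring
  rw [hdiff]
  have hT6 : ‖T ^ 6‖ = T ^ 6 := by
    rw [Real.norm_eq_abs, abs_of_nonneg (by positivity)]
  rw [hT6, Real.norm_eq_abs]
  have habs : |r ^ 2 / (2 * T) * δ| = r ^ 2 / (2 * T) * δ := by
    apply abs_of_nonneg
    apply mul_nonneg _ hδ0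
    positivity
  rw [habs]
  have hbound : r ^ 2 / (2 * T) * δ ≤ r ^ 2 / (2 * T) * (128 * T ^ 7 / 10080) := by
    apply mul_le_mul_of_nonneg_left _ (by positivity)
    rw [← hxpow]; exact hδ1
  calc r ^ 2 / (2 * T) * δ ≤ r ^ 2 / (2 * T) * (128 * T ^ 7 / 10080) := hbound
    _ = r ^ 2 * T ^ 6 * (64 / 10080) := by field_simp; ring
    _ ≤ r ^ 2 * T ^ 6 := by nlinarith [sq_nonneg r, pow_pos hT0 6]
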